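/- arXiv:2307.05117 — 5 statements merged into one kernel-verified Lean document; each statement's English description precedes it below -/
import Mathlib

section
/- Let n ≥ 1, a, b ∈ {−1,1}^n, and let c > 0 and ε ∈ (0,1) be reals such that Δ(a,b) ≥ c·√n and n ≤ c²/(2ε²). Then the unique minimizer x* = Δ(a,b)/n of x ↦ ‖x·a − b‖_2^2 satisfies x* > 0, and for every x ≤ 0 one has ‖x·a − b‖_2^2 ≥ (1 + 2ε²)·min_{y ∈ ℝ} ‖y·a − b‖_2^2. -/
open Finset

theorem stmt_2 (n : ℕ) (hn : 1 ≤ n) (a b : Fin n → ℝ)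
    (ha : ∀ i, a i = 1 ∨ a i = -1) (hb : ∀ i, b i = 1 ∨ b i = -1)
    (c ε : ℝ) (hc : 0 < c) (hε0 : 0 < ε) (hε1 : ε < 1)
    (hΔ : (∑ i, a i * b i) ≥ c * Real.sqrt n)
    (hn2 : (n : ℝ) ≤ c ^ 2 / (2 * ε ^ 2)) :
    0 < (∑ i, a i * b i) / n ∧
    ∀ x : ℝ, x ≤ 0 →
      ∑ i, (x * a i - b i) ^ 2 ≥
        (1 + 2 * ε ^ 2) * ⨅ y : ℝ, ∑ i, (y * a i - b i) ^ 2 := by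
  set Δ : ℝ := ∑ i, a i * b i with hΔdef
  have hnpos : (0:ℝ) < n := by exact_mod_cast hn
  have hsq : Real.sqrt n > 0 := Real.sqrt_pos.mpr hnpos
  have hΔpos : 0 < Δ := lt_of_lt_of_le (mul_pos hc hsq) hΔ
  have hf : ∀ x : ℝ, ∑ i, (x * a i - b i) ^ 2 = n * x ^ 2 - 2 * x * Δ + n := by
    intro x
    have h1 : ∑ i, (x * a i - b i) ^ 2 = ∑ i, (x ^ 2 - 2 * x * (a i * b i) + 1) := by
      refine Finset.sum_congr rfl fun i _ => ?_
      rcases ha i with h | h <;> rcases hb i with h' | h' <;> rw [h, h'] <;> ring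
    rw [h1, Finset.sum_add_distrib, Finset.sum_sub_distrib, Finset.sum_const,
      Finset.sum_const, ← Finset.mul_sum, ← hΔdef]
    simp [Finset.card_univ]
  have hbdd : BddBelow (Set.range fun y : ℝ => ∑ i, (y * a i - b i) ^ 2) := by
    refine ⟨0, ?_⟩
    rintro z ⟨y, rfl⟩
    positivity
  have hinf : (⨅ y : ℝ, ∑ i, (y * a i - b i) ^ 2) = n - Δ ^ 2 / n := by
    apply le_antisymm
    · have := ciInf_le hbdd (Δ / n)
      refine this.trans_eq ?_
      rw [hf]
      field_simp
      ring
    · refine le_ciInf fun y => ?_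
      rw [hf]
      have hd : Δ ^ 2 / n * n = Δ ^ 2 := div_mul_cancel₀ _ (ne_of_gt hnpos)
      nlinarith [sq_nonneg ((n:ℝ) * y - Δ)]
  have h1 : c ^ 2 * n ≤ Δ ^ 2 := by
    have h0 : 0 ≤ c * Real.sqrt n := by positivity
    have h2 : (c * Real.sqrt n) ^ 2 ≤ Δ ^ 2 := by nlinarith
    calc c ^ 2 * n = (c * Real.sqrt n) ^ 2 := by
          rw [mul_pow, Real.sq_sqrt hnpos.le]
      _ ≤ Δ ^ 2 := h2
  have h2 : 2 * ε ^ 2 * n ≤ c ^ 2 := by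
    have hε2 : 0 < 2 * ε ^ 2 := by positivity
    calc 2 * ε ^ 2 * n ≤ 2 * ε ^ 2 * (c ^ 2 / (2 * ε ^ 2)) := by
          exact mul_le_mul_of_nonneg_left hn2 hε2.le
      _ = c ^ 2 := by field_simp
  refine ⟨div_pos hΔpos hnpos, fun x hx => ?_⟩
  rw [hinf, hf]
  have hd : Δ ^ 2 / n * n = Δ ^ 2 := div_mul_cancel₀ _ (ne_of_gt hnpos)
  have hdge : 2 * ε ^ 2 * n ≤ Δ ^ 2 / n := by
    rw [le_div_iff₀ hnpos]
    nlinarith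
  nlinarith [mul_nonneg (neg_nonneg.mpr hx) hΔpos.le, sq_nonneg x, sq_nonneg ε,
    mul_nonneg (sq_nonneg ε) (div_nonneg (sq_nonneg Δ) hnpos.le)]
end

section
/- Let n ≥ 1, a, b ∈ {−1,1}^n, set r = #{i ∈ [n] : a_i = b_i}, and let c > 0 and ε ∈ (0,1) be reals with r ≥ n/2 + (c/2)·√n and n ≤ c²/ε². Then min_{y ∈ ℝ} ‖y·a − b‖_1 ≤ n − c·√n, and for every x ≤ 0 one has ‖x·a − b‖_1 ≥ n; consequently ‖x·a − b‖_1 ≥ (1 + ε)·min_{y ∈ ℝ} ‖y·a − b‖_1 for every x ≤ 0. -/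
open Finset

theorem stmt_4 (n : ℕ) (hn : 1 ≤ n) (a b : Fin n → ℝ)
    (ha : ∀ i, a i = 1 ∨ a i = -1) (hb : ∀ i, b i = 1 ∨ b i = -1)
    (c ε : ℝ) (hc : 0 < c) (hε0 : 0 < ε) (hε1 : ε < 1)
    (hr : ((univ.filter (fun i => a i = b i)).card : ℝ) ≥ n / 2 + c / 2 * Real.sqrt n)
    (hn2 : (n : ℝ) ≤ c ^ 2 / ε ^ 2) :
    (⨅ y : ℝ, ∑ i, |y * a i - b i|) ≤ (n : ℝ) - c * Real.sqrt n ∧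
    (∀ x : ℝ, x ≤ 0 → ∑ i, |x * a i - b i| ≥ (n : ℝ)) ∧
    (∀ x : ℝ, x ≤ 0 →
      ∑ i, |x * a i - b i| ≥ (1 + ε) * ⨅ y : ℝ, ∑ i, |y * a i - b i|) := by
  classical
  set s := Real.sqrt n with hsdef
  have hs0 : 0 ≤ s := Real.sqrt_nonneg _
  have hs2 : s ^ 2 = (n : ℝ) := Real.sq_sqrt (by positivity)
  set r := (univ.filter (fun i => a i = b i)).card with hrdef
  have hcards : r + (univ.filter (fun i => ¬ a i = b i)).card = n := by
    rw [hrdef, Finset.card_filter_add_card_filter_not]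
    simp
  have hcard : ((univ.filter (fun i => ¬ a i = b i)).card : ℝ) = (n : ℝ) - r := by
    have := hcards
    push_cast [← this]
    ring
  have hbdd : BddBelow (Set.range fun y : ℝ => ∑ i, |y * a i - b i|) := by
    refine ⟨0, ?_⟩
    rintro _ ⟨y, rfl⟩
    positivity
  -- value at y = 1
  have h1 : ∑ i, |1 * a i - b i| = 2 * ((n : ℝ) - r) := by
    have : ∑ i, |1 * a i - b i| = ∑ i, (if a i = b i then (0:ℝ) else 2) := by
      refine Finset.sum_congr rfl fun i _ => ?_
      rcases ha i with h1 | h1 <;> rcases hb i with h2 | h2 <;>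
        simp [h1, h2] <;> norm_num
    rw [this, Finset.sum_ite, Finset.sum_const, Finset.sum_const]
    simp [hcard]
    linarith [hcard]
  have part1 : (⨅ y : ℝ, ∑ i, |y * a i - b i|) ≤ (n : ℝ) - c * s := by
    have hle := ciInf_le hbdd (1 : ℝ)
    rw [h1] at hle
    have : 2 * ((n : ℝ) - r) ≤ (n : ℝ) - c * s := by linarith [hr]
    linarith
  have h2r : (n : ℝ) ≤ 2 * r := by nlinarith [mul_nonneg hc.le hs0, hr]
  have part2 : ∀ x : ℝ, x ≤ 0 → ∑ i, |x * a i - b i| ≥ (n : ℝ) := by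
    intro x hx
    have hpt : ∀ i ∈ univ, (if a i = b i then 1 - x else 1 + x) ≤ |x * a i - b i| := by
      intro i _
      by_cases h : a i = b i
      · rw [if_pos h]
        have he : x * a i - b i = (x - 1) * a i := by rw [← h]; ring
        rw [he, abs_mul]
        rcases ha i with h1 | h1 <;> rw [h1] <;>
          simp [abs_of_nonpos (by linarith : x - 1 ≤ 0)]
      · rw [if_neg h]
        have hba : b i = - a i := by
          rcases ha i with h1 | h1 <;> rcases hb i with h2 | h2 <;>
            simp_all <;> norm_num
        have he : x * a i - b i = (x + 1) * a i := by rw [hba]; ring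
        rw [he, abs_mul]
        have hax : (1:ℝ) + x ≤ |x + 1| := by
          have := le_abs_self (x + 1); linarith
        rcases ha i with h1 | h1 <;> rw [h1] <;> simpa using hax
    have hsum : ∑ i, (if a i = b i then 1 - x else 1 + x)
        ≤ ∑ i, |x * a i - b i| := Finset.sum_le_sum hpt
    have heq : ∑ i, (if a i = b i then 1 - x else 1 + x)
        = (r : ℝ) * (1 - x) + ((n : ℝ) - r) * (1 + x) := by
      rw [Finset.sum_ite, Finset.sum_const, Finset.sum_const]
      simp [hcard]
      linarith [hcard]
    rw [heq] at hsum
    have hnn : ((n : ℝ) - 2 * r) * x ≥ 0 := by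
      nlinarith
    nlinarith
  refine ⟨part1, part2, ?_⟩
  intro x hx
  have hinf0 : 0 ≤ ⨅ y : ℝ, ∑ i, |y * a i - b i| := by
    refine le_ciInf fun y => ?_
    positivity
  have hεs : ε * s ≤ c := by
    have h1 : ε ^ 2 * (n : ℝ) ≤ c ^ 2 := by
      rw [le_div_iff₀ (by positivity : (0:ℝ) < ε ^ 2)] at hn2
      nlinarith [hn2]
    nlinarith [mul_nonneg hε0.le hs0, hc.le]
  have key : (1 + ε) * ((n : ℝ) - c * s) ≤ (n : ℝ) := by
    have h2 : ε * s * s ≤ c * s := mul_le_mul_of_nonneg_right hεs hs0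
    have h3 : ε * (n : ℝ) ≤ c * s := by
      calc ε * (n : ℝ) = ε * s * s := by rw [← hs2]; ring
        _ ≤ c * s := h2
    have h4 : 0 ≤ ε * (c * s) := mul_nonneg hε0.le (mul_nonneg hc.le hs0)
    have hexp : (1 + ε) * ((n : ℝ) - c * s) = (n:ℝ) + ε * (n:ℝ) - c * s - ε * (c * s) := by ring
    have h5 : 0 ≤ c * s := mul_nonneg hc.le hs0
    linarith
  calc (1 + ε) * ⨅ y : ℝ, ∑ i, |y * a i - b i|
      ≤ (1 + ε) * ((n : ℝ) - c * s) :=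
        mul_le_mul_of_nonneg_left part1 (by linarith)
    _ ≤ (n : ℝ) := key
    _ ≤ ∑ i, |x * a i - b i| := part2 x hx
end

section
/- Let 1 ≤ r ≤ 2, let (Ω, μ) be a probability space, and let X₁, …, X_n : Ω → ℝ be independent random variables with E[X_i] = 0 and E[|X_i|^r] < ∞ for each i. Then E[|X₁ + ⋯ + X_n|^r] ≤ 2·Σ_{i=1}^n E[|X_i|^r]. -/
open MeasureTheory ProbabilityTheory Finset
open intervalIntegral


lemma vbe_rpow_add_le {s u v : ℝ} (hs0 : 0 ≤ s) (hs1 : s ≤ 1) (hu : 0 ≤ u) (hv : 0 ≤ v) :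
    (u + v) ^ s ≤ u ^ s + v ^ s := by
  have h := NNReal.rpow_add_le_add_rpow u.toNNReal v.toNNReal hs0 hs1
  have := NNReal.coe_le_coe.mpr h
  push_cast at this
  rwa [Real.coe_toNNReal _ hu, Real.coe_toNNReal _ hv] at this

lemma vbe_rpow_sub_le {s u v : ℝ} (hs0 : 0 ≤ s) (hs1 : s ≤ 1) (hv : 0 ≤ v) (hvu : v ≤ u) :
    u ^ s - v ^ s ≤ (u - v) ^ s := by
  have h : u ^ s ≤ (u - v) ^ s + v ^ s := by
    have := vbe_rpow_add_le hs0 hs1 (sub_nonneg.mpr hvu) hv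
    rwa [sub_add_cancel] at this
  linarith

noncomputable def vbePsi (s : ℝ) (t : ℝ) : ℝ := Real.sign t * |t| ^ s

lemma vbePsi_of_nonneg {s t : ℝ} (ht : 0 ≤ t) : vbePsi s t = if t = 0 then 0 else t ^ s := by
  rcases eq_or_lt_of_le ht with h | h
  · simp [vbePsi, ← h, Real.sign_zero]
  · simp [vbePsi, Real.sign_of_pos h, abs_of_pos h, ne_of_gt h]

lemma vbePsi_neg (s t : ℝ) : vbePsi s (-t) = -vbePsi s t := by
  simp [vbePsi, Real.sign_neg, abs_neg]

lemma vbePsi_nonneg {s t : ℝ} (ht : 0 ≤ t) : 0 ≤ vbePsi s t := by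
  rw [vbePsi_of_nonneg ht]
  split
  · exact le_refl 0
  · exact Real.rpow_nonneg ht s

lemma vbePsi_mono {s : ℝ} (hs : 0 ≤ s) : Monotone (vbePsi s) := by
  intro x y hxy
  rcases le_or_gt 0 x with hx | hx
  · rw [vbePsi_of_nonneg hx, vbePsi_of_nonneg (hx.trans hxy)]
    split
    · split
      · exact le_refl 0
      · exact Real.rpow_nonneg (hx.trans hxy) s
    · rename_i hx0
      rw [if_neg (by intro h; exact hx0 (le_antisymm (h ▸ hxy) hx))]
      exact Real.rpow_le_rpow hx hxy hs
  · rcases le_or_gt 0 y with hy | hy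
    · have h1 : vbePsi s x ≤ 0 := by
        have := neg_nonneg.mpr (neg_nonpos_of_nonneg (vbePsi_nonneg (s := s) (t := -x) (by linarith)))
        have h2 : 0 ≤ vbePsi s (-x) := vbePsi_nonneg (by linarith)
        rw [vbePsi_neg] at h2; linarith
      exact h1.trans (vbePsi_nonneg hy)
    · have h1 : vbePsi s (-y) ≤ vbePsi s (-x) := by
        rw [vbePsi_of_nonneg (by linarith : (0:ℝ) ≤ -y), vbePsi_of_nonneg (by linarith : (0:ℝ) ≤ -x)]
        rw [if_neg (by intro h; linarith [neg_eq_zero.mp h]), if_neg (by intro h; linarith [neg_eq_zero.mp h])]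
        exact Real.rpow_le_rpow (by linarith) (by linarith) hs
      have := neg_le_neg h1
      rwa [vbePsi_neg, vbePsi_neg, neg_neg, neg_neg] at this

lemma vbePsi_of_neg {s t : ℝ} (ht : t < 0) : vbePsi s t = -((-t) ^ s) := by
  have h := vbePsi_neg s t
  rw [vbePsi_of_nonneg (by linarith : (0:ℝ) ≤ -t), if_neg (by intro h2; linarith [neg_eq_zero.mp h2])] at h
  linarith

lemma vbePsi_sub_le {s : ℝ} (hs0 : 0 ≤ s) (hs1 : s ≤ 1) (a b : ℝ) :
    vbePsi s a - vbePsi s b ≤ 2 * |a - b| ^ s := by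
  have hRnn : (0:ℝ) ≤ |a - b| ^ s := Real.rpow_nonneg (abs_nonneg _) s
  rcases le_or_gt a b with h | h
  · have := vbePsi_mono hs0 h; linarith
  · -- b < a
    have habs : |a - b| = a - b := abs_of_pos (by linarith)
    rw [habs]
    have hsub : (0:ℝ) ≤ a - b := by linarith
    rcases lt_trichotomy b 0 with hb | hb | hb
    · rcases lt_trichotomy a 0 with ha | ha | ha
      · -- both negative
        rw [vbePsi_of_neg ha, vbePsi_of_neg hb]
        have := vbe_rpow_sub_le hs0 hs1 (by linarith : (0:ℝ) ≤ -a) (by linarith : -a ≤ -b)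
        have heq : -b - -a = a - b := by ring
        rw [heq] at this
        linarith [Real.rpow_nonneg hsub s]
      · rw [ha, vbePsi_of_nonneg (le_refl 0), if_pos rfl, vbePsi_of_neg hb]
        have h0 : (0:ℝ) - b = -b := by ring
        rw [h0]
        linarith [Real.rpow_nonneg (by linarith : (0:ℝ) ≤ -b) s]
      · -- b < 0 < a
        rw [vbePsi_of_nonneg ha.le, if_neg (ne_of_gt ha), vbePsi_of_neg hb]
        have h1 : a ^ s ≤ (a - b) ^ s := Real.rpow_le_rpow ha.le (by linarith) hs0
        have h2 : (-b) ^ s ≤ (a - b) ^ s := Real.rpow_le_rpow (by linarith) (by linarith) hs0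
        linarith
    · -- b = 0
      subst hb
      have ha : 0 < a := h
      rw [vbePsi_of_nonneg (le_refl 0), if_pos rfl, vbePsi_of_nonneg ha.le,
        if_neg (ne_of_gt ha)]
      have h0 : a - 0 = a := by ring
      rw [h0]
      linarith [Real.rpow_nonneg ha.le s]
    · -- 0 < b < a
      rw [vbePsi_of_nonneg (by linarith : (0:ℝ) ≤ a), if_neg (by intro h2; linarith),
        vbePsi_of_nonneg hb.le, if_neg (ne_of_gt hb)]
      have := vbe_rpow_sub_le hs0 hs1 hb.le h.le
      linarith [Real.rpow_nonneg hsub s]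
lemma vbePsi_diff_le {s : ℝ} (hs0 : 0 ≤ s) (hs1 : s ≤ 1) (a b : ℝ) :
    |vbePsi s a - vbePsi s b| ≤ 2 * |a - b| ^ s := by
  rw [abs_sub_le_iff]
  constructor
  · exact vbePsi_sub_le hs0 hs1 a b
  · rw [abs_sub_comm]; exact vbePsi_sub_le hs0 hs1 b a

lemma vbePsi_zero (s : ℝ) : vbePsi s 0 = 0 := by
  simp [vbePsi, Real.sign_zero]

lemma measurable_vbePsi {s : ℝ} (hs : 0 ≤ s) : Measurable (vbePsi s) := by
  have hsign : Measurable Real.sign := by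
    have : Real.sign = fun r => if r < 0 then (-1:ℝ) else if 0 < r then 1 else 0 := by
      funext r; rfl
    rw [this]
    exact Measurable.ite (measurableSet_lt measurable_id measurable_const)
      measurable_const (Measurable.ite (measurableSet_lt measurable_const measurable_id)
        measurable_const measurable_const)
  exact hsign.mul ((Real.continuous_rpow_const hs).measurable.comp measurable_abs)

lemma abs_vbePsi_le (s t : ℝ) : |vbePsi s t| ≤ |t| ^ s := by
  rw [vbePsi, abs_mul, abs_of_nonneg (Real.rpow_nonneg (abs_nonneg t) s)]
  rcases Real.sign_apply_eq t with h | h | h <;> rw [h] <;> simp <;>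
    positivity

lemma continuous_vbePsi {s : ℝ} (hs : 0 < s) : Continuous (vbePsi s) := by
  rw [continuous_iff_continuousAt]
  intro u
  rcases lt_trichotomy u 0 with hu | hu | hu
  · have hcont : ContinuousAt (fun t : ℝ => -((-t) ^ s)) u :=
      (((Real.continuous_rpow_const hs.le).comp continuous_neg).neg).continuousAt
    apply hcont.congr
    filter_upwards [eventually_lt_nhds hu] with t ht
    exact (vbePsi_of_neg ht).symm
  · have h0 : vbePsi s 0 = 0 := by simp [vbePsi, Real.sign_zero]
    rw [ContinuousAt, hu, h0]
    apply squeeze_zero_norm (fun t => abs_vbePsi_le s t)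
    have hc : Continuous (fun t : ℝ => |t| ^ s) :=
      (Real.continuous_rpow_const hs.le).comp continuous_abs
    have := hc.tendsto 0
    simpa [Real.zero_rpow (ne_of_gt hs)] using this
  · have hcont : ContinuousAt (fun t : ℝ => t ^ s) u :=
      (Real.continuous_rpow_const hs.le).continuousAt
    apply hcont.congr
    filter_upwards [eventually_gt_nhds hu] with t ht
    rw [vbePsi_of_nonneg ht.le, if_neg (ne_of_gt ht)]

lemma hasDerivAt_abs_rpow_vbe {p : ℝ} (hp : 1 < p) (u : ℝ) :
    HasDerivAt (fun t : ℝ => |t| ^ p) (p * vbePsi (p - 1) u) u := by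
  have h := hasDerivAt_abs_rpow u hp
  convert h using 1
  rcases lt_trichotomy u 0 with hu | hu | hu
  · rw [vbePsi_of_neg hu, abs_of_neg hu]
    have : (-u) ^ (p - 2 + 1) = (-u) ^ (p-2) * (-u) := Real.rpow_add_one (by linarith : -u ≠ 0) _
    have h2 : p - 2 + 1 = p - 1 := by ring
    rw [h2] at this
    rw [this]; ring
  · subst hu
    rw [vbePsi_of_nonneg (le_refl 0), if_pos rfl]
    simp
  · rw [vbePsi_of_nonneg hu.le, if_neg (ne_of_gt hu), abs_of_pos hu]
    have : u ^ (p - 2 + 1) = u ^ (p-2) * u := Real.rpow_add_one (ne_of_gt hu) _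
    have h2 : p - 2 + 1 = p - 1 := by ring
    rw [h2] at this
    rw [this]; ring

lemma vbe_key_aux {r : ℝ} (hr1 : 1 < r) (hr2 : r ≤ 2) (x y : ℝ) (hy : 0 ≤ y) :
    |x + y| ^ r ≤ |x| ^ r + r * vbePsi (r - 1) x * y + 2 * |y| ^ r := by
  set s := r - 1 with hs
  have hs0 : 0 < s := by simp [hs]; linarith
  have hs1 : s ≤ 1 := by simp [hs]; linarith
  have hderiv : ∀ t ∈ Set.uIcc (0:ℝ) y, HasDerivAt (fun t => |x + t| ^ r) (r * vbePsi s (x + t)) t := by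
    intro t _
    have h1 : HasDerivAt (fun u : ℝ => |u| ^ r) (r * vbePsi s (x + t)) (x + t) :=
      hasDerivAt_abs_rpow_vbe hr1 (x + t)
    have h2 : HasDerivAt (fun u : ℝ => x + u) 1 t := (hasDerivAt_id t).const_add x
    have := h1.comp t h2
    rw [mul_one] at this
    exact this
  have hcont : Continuous fun t : ℝ => r * vbePsi s (x + t) :=
    continuous_const.mul ((continuous_vbePsi hs0).comp (continuous_const.add continuous_id))
  have heq := intervalIntegral.integral_eq_sub_of_hasDerivAt hderiv (hcont.intervalIntegrable 0 y)
  simp only [add_zero] at heq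
  -- heq : ∫ t in 0..y, r * vbePsi s (x + t) = |x + y| ^ r - |x| ^ r
  have hsplit : (∫ t in (0:ℝ)..y, r * vbePsi s (x + t)) - r * vbePsi s x * y
      = ∫ t in (0:ℝ)..y, (r * vbePsi s (x + t) - r * vbePsi s x) := by
    rw [intervalIntegral.integral_sub (hcont.intervalIntegrable 0 y) (intervalIntegrable_const),
      intervalIntegral.integral_const]
    simp [smul_eq_mul]
    ring
  have hbound : (∫ t in (0:ℝ)..y, (r * vbePsi s (x + t) - r * vbePsi s x))
      ≤ ∫ t in (0:ℝ)..y, (2 * r) * t ^ s := by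
    apply intervalIntegral.integral_mono_on hy
      ((hcont.intervalIntegrable 0 y).sub intervalIntegrable_const)
      ((intervalIntegral.intervalIntegrable_rpow (Or.inl hs0.le)).const_mul (2 * r))
    intro t ht
    have hd := vbePsi_diff_le hs0.le hs1 (x + t) x
    have habs : |x + t - x| = t := by rw [add_sub_cancel_left, abs_of_nonneg ht.1]
    rw [habs] at hd
    have := abs_le.mp hd
    nlinarith [this.2]
  have hcomp : (∫ t in (0:ℝ)..y, (2 * r) * t ^ s) = 2 * y ^ r := by
    rw [intervalIntegral.integral_const_mul, integral_rpow (Or.inl (by linarith : (-1:ℝ) < s))]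
    have h1 : s + 1 = r := by simp [hs]
    rw [h1, Real.zero_rpow (by linarith : r ≠ 0)]
    field_simp
    ring
  have hyr : y ^ r = |y| ^ r := by rw [abs_of_nonneg hy]
  linarith [heq, hsplit, hbound, hcomp.symm ▸ hbound]

lemma vbe_key {r : ℝ} (hr1 : 1 ≤ r) (hr2 : r ≤ 2) (x y : ℝ) :
    |x + y| ^ r ≤ |x| ^ r + r * vbePsi (r - 1) x * y + 2 * |y| ^ r := by
  rcases eq_or_lt_of_le hr1 with hr | hr
  · subst hr
    simp only [Real.rpow_one, one_mul]
    have h1 : |vbePsi (1 - 1 : ℝ) x * y| ≤ |y| := by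
      rw [abs_mul]
      have := abs_vbePsi_le (1 - 1 : ℝ) x
      have h0 : |x| ^ ((1:ℝ) - 1) = 1 := by norm_num
      nlinarith [abs_nonneg y, abs_nonneg (vbePsi (1-1:ℝ) x)]
    have h2 := abs_add_le x y
    have := (abs_le.mp h1).1
    linarith
  · rcases le_or_gt 0 y with hy | hy
    · exact vbe_key_aux hr hr2 x y hy
    · have h := vbe_key_aux hr hr2 (-x) (-y) (by linarith)
      rw [show -x + -y = -(x + y) by ring, abs_neg, abs_neg, abs_neg, vbePsi_neg] at h
      calc |x + y| ^ r ≤ |x| ^ r + r * (-vbePsi (r-1) x) * (-y) + 2 * |y| ^ r := h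
        _ = |x| ^ r + r * vbePsi (r-1) x * y + 2 * |y| ^ r := by ring

lemma vbe_rpow_le_one_add {r u : ℝ} (hr1 : 1 ≤ r) (hu : 0 ≤ u) {s : ℝ} (hs0 : 0 ≤ s)
    (hsr : s ≤ r) : u ^ s ≤ 1 + u ^ r := by
  rcases le_total u 1 with h | h
  · have := Real.rpow_le_one hu h hs0
    have := Real.rpow_nonneg hu r
    linarith
  · have := Real.rpow_le_rpow_of_exponent_le h hsr
    have : (0:ℝ) ≤ u ^ s := Real.rpow_nonneg hu s
    linarith [Real.rpow_le_rpow_of_exponent_le h hsr]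

lemma vbe_add_bound {r : ℝ} (hr1 : 1 ≤ r) (hr2 : r ≤ 2) (a b : ℝ) :
    |a + b| ^ r ≤ 4 * (|a| ^ r + |b| ^ r) := by
  have h0r : (0:ℝ) ≤ r := by linarith
  set m := max |a| |b| with hm
  have hmnn : 0 ≤ m := le_trans (abs_nonneg a) (le_max_left _ _)
  have h1 : |a + b| ^ r ≤ (2 * m) ^ r := by
    apply Real.rpow_le_rpow (abs_nonneg _) _ h0r
    calc |a + b| ≤ |a| + |b| := abs_add_le a b
      _ ≤ 2 * m := by
          have := le_max_left |a| |b|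
          have := le_max_right |a| |b|
          simp only [hm]; linarith
  have h2 : (2 * m) ^ r = 2 ^ r * m ^ r := Real.mul_rpow (by norm_num) hmnn
  have h3 : (2:ℝ) ^ r ≤ 4 := by
    have : (2:ℝ) ^ r ≤ 2 ^ (2:ℝ) := Real.rpow_le_rpow_of_exponent_le one_le_two hr2
    have h4 : (2:ℝ) ^ (2:ℝ) = 4 := by
      rw [show ((2:ℝ):ℝ) = ((2:ℕ):ℝ) by norm_num, Real.rpow_natCast]; norm_num
    linarith
  have h5 : m ^ r ≤ |a| ^ r + |b| ^ r := by
    rcases max_cases |a| |b| with ⟨hq, _⟩ | ⟨hq, _⟩ <;> rw [hm, hq]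
    · linarith [Real.rpow_nonneg (abs_nonneg b) r]
    · linarith [Real.rpow_nonneg (abs_nonneg a) r]
  have hmr : 0 ≤ m ^ r := Real.rpow_nonneg hmnn r
  nlinarith [Real.rpow_nonneg (abs_nonneg (a+b)) r]

lemma vbe_step {Ω : Type*} [MeasurableSpace Ω] (μ : Measure Ω) [IsProbabilityMeasure μ]
    {r : ℝ} (hr1 : 1 ≤ r) (hr2 : r ≤ 2) {S Y : Ω → ℝ} (hSm : Measurable S) (hYm : Measurable Y)
    (hindep : IndepFun S Y μ)
    (hSint : Integrable (fun ω => |S ω| ^ r) μ) (hYint : Integrable (fun ω => |Y ω| ^ r) μ)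
    (hYmean : ∫ ω, Y ω ∂μ = 0) :
    Integrable (fun ω => |S ω + Y ω| ^ r) μ ∧
      ∫ ω, |S ω + Y ω| ^ r ∂μ ≤ (∫ ω, |S ω| ^ r ∂μ) + 2 * ∫ ω, |Y ω| ^ r ∂μ := by
  have h0r : (0:ℝ) ≤ r := by linarith
  have hmr : ∀ {f : Ω → ℝ}, Measurable f → Measurable (fun ω => |f ω| ^ r) := by
    intro f hf
    exact (Real.continuous_rpow_const h0r).measurable.comp (measurable_abs.comp hf)
  -- integrability of |S + Y|^r
  have hsum_int : Integrable (fun ω => |S ω + Y ω| ^ r) μ := by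
    apply Integrable.mono ((hSint.add hYint).const_mul 4) (hmr (hSm.add hYm)).aestronglyMeasurable
    filter_upwards with ω
    simp only [Pi.add_apply]
    rw [Real.norm_eq_abs, Real.norm_eq_abs,
      abs_of_nonneg (Real.rpow_nonneg (abs_nonneg _) r)]
    have h := vbe_add_bound hr1 hr2 (S ω) (Y ω)
    have h2 : (0:ℝ) ≤ 4 * (|S ω| ^ r + |Y ω| ^ r) := by
      have := Real.rpow_nonneg (abs_nonneg (S ω)) r
      have := Real.rpow_nonneg (abs_nonneg (Y ω)) r
      linarith
    rw [abs_of_nonneg h2]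
    exact h
  -- integrability of Y
  have hYint1 : Integrable Y μ := by
    apply Integrable.mono ((integrable_const (1:ℝ)).add hYint) hYm.aestronglyMeasurable
    filter_upwards with ω
    simp only [Pi.add_apply]
    rw [Real.norm_eq_abs, Real.norm_eq_abs]
    have h := vbe_rpow_le_one_add hr1 (abs_nonneg (Y ω)) zero_le_one hr1
    rw [Real.rpow_one] at h
    have h2 : (0:ℝ) ≤ 1 + |Y ω| ^ r := by
      have := Real.rpow_nonneg (abs_nonneg (Y ω)) r; linarith
    rw [abs_of_nonneg h2]
    exact h
  -- integrability of vbePsi (r-1) ∘ S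
  have hs0 : (0:ℝ) ≤ r - 1 := by linarith
  have hpsiS : Integrable (fun ω => vbePsi (r - 1) (S ω)) μ := by
    apply Integrable.mono ((integrable_const (1:ℝ)).add hSint)
      ((measurable_vbePsi hs0).comp hSm).aestronglyMeasurable
    filter_upwards with ω
    simp only [Pi.add_apply]
    rw [Real.norm_eq_abs, Real.norm_eq_abs]
    have h := (abs_vbePsi_le (r-1) (S ω)).trans
      (vbe_rpow_le_one_add hr1 (abs_nonneg (S ω)) hs0 (by linarith))
    have h2 : (0:ℝ) ≤ 1 + |S ω| ^ r := by
      have := Real.rpow_nonneg (abs_nonneg (S ω)) r; linarith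
    rw [abs_of_nonneg h2]
    exact h
  -- independence of vbePsi(S) and Y
  have hIndepPsi : IndepFun (fun ω => vbePsi (r - 1) (S ω)) Y μ :=
    hindep.comp (measurable_vbePsi hs0) measurable_id
  have hmul_int : Integrable (fun ω => vbePsi (r - 1) (S ω) * Y ω) μ :=
    hIndepPsi.integrable_mul hpsiS hYint1
  have hzero : ∫ ω, vbePsi (r - 1) (S ω) * Y ω ∂μ = 0 := by
    have h := hIndepPsi.integral_fun_mul_eq_mul_integral hpsiS.aestronglyMeasurable hYint1.aestronglyMeasurable
    rw [hYmean, mul_zero] at h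
    exact h
  refine ⟨hsum_int, ?_⟩
  have h2' : Integrable (fun ω => r * (vbePsi (r - 1) (S ω) * Y ω)) μ := hmul_int.const_mul r
  have h3' : Integrable (fun ω => 2 * |Y ω| ^ r) μ := hYint.const_mul 2
  have h12 : Integrable (fun ω => |S ω| ^ r + r * (vbePsi (r - 1) (S ω) * Y ω)) μ :=
    hSint.add h2'
  have hRHSint : Integrable
      (fun ω => |S ω| ^ r + r * (vbePsi (r - 1) (S ω) * Y ω) + 2 * |Y ω| ^ r) μ :=
    h12.add h3'
  have hmono := integral_mono hsum_int hRHSint (fun ω => by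
    have := vbe_key hr1 hr2 (S ω) (Y ω)
    calc |S ω + Y ω| ^ r ≤ |S ω| ^ r + r * vbePsi (r-1) (S ω) * Y ω + 2 * |Y ω| ^ r := this
      _ = |S ω| ^ r + r * (vbePsi (r-1) (S ω) * Y ω) + 2 * |Y ω| ^ r := by ring)
  rw [integral_add h12 h3', integral_add hSint h2', MeasureTheory.integral_const_mul, MeasureTheory.integral_const_mul,
    hzero, mul_zero, add_zero] at hmono
  exact hmono

theorem stmt_13 {Ω : Type*} [MeasurableSpace Ω] (μ : Measure Ω) [IsProbabilityMeasure μ]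
    (r : ℝ) (hr1 : 1 ≤ r) (hr2 : r ≤ 2) (n : ℕ) (X : Fin n → Ω → ℝ)
    (hmeas : ∀ i, Measurable (X i))
    (hindep : iIndepFun (m := fun _ => Real.measurableSpace) X μ)
    (hmean : ∀ i, ∫ ω, X i ω ∂μ = 0)
    (hmom : ∀ i, Integrable (fun ω => |X i ω| ^ r) μ) :
    ∫ ω, |∑ i, X i ω| ^ r ∂μ ≤ 2 * ∑ i, ∫ ω, |X i ω| ^ r ∂μ := by
  classical
  have key : ∀ s : Finset (Fin n),
      Integrable (fun ω => |∑ i ∈ s, X i ω| ^ r) μ ∧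
      ∫ ω, |∑ i ∈ s, X i ω| ^ r ∂μ ≤ 2 * ∑ i ∈ s, ∫ ω, |X i ω| ^ r ∂μ := by
    intro s
    induction s using Finset.induction_on with
    | empty =>
      constructor
      · simpa [Real.zero_rpow (by linarith : r ≠ 0)] using (integrable_const (0:ℝ))
      · simp [Real.zero_rpow (by linarith : r ≠ 0)]
    | insert _ _ ha =>
      rename_i a s ih
      have hSm : Measurable (fun ω => ∑ i ∈ s, X i ω) :=
        Finset.measurable_sum s (fun i _ => hmeas i)
      have hIndep : IndepFun (fun ω => ∑ i ∈ s, X i ω) (X a) μ := by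
        have h := hindep.indepFun_finsetSum_of_notMem hmeas ha
        have : (∑ j ∈ s, X j) = fun ω => ∑ j ∈ s, X j ω := by
          funext ω; simp [Finset.sum_apply]
        rwa [this] at h
      obtain ⟨hint, hle⟩ := vbe_step μ hr1 hr2 hSm (hmeas a) hIndep ih.1 (hmom a) (hmean a)
      have hrw : ∀ ω, ∑ i ∈ insert a s, X i ω = (∑ i ∈ s, X i ω) + X a ω := by
        intro ω; rw [Finset.sum_insert ha]; ring
      constructor
      · apply hint.congr
        filter_upwards with ω
        rw [hrw ω]
      · calc ∫ ω, |∑ i ∈ insert a s, X i ω| ^ r ∂μ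
            = ∫ ω, |(∑ i ∈ s, X i ω) + X a ω| ^ r ∂μ := by
              congr 1; funext ω; rw [hrw ω]
          _ ≤ (∫ ω, |∑ i ∈ s, X i ω| ^ r ∂μ) + 2 * ∫ ω, |X a ω| ^ r ∂μ := hle
          _ ≤ 2 * ∑ i ∈ s, ∫ ω, |X i ω| ^ r ∂μ + 2 * ∫ ω, |X a ω| ^ r ∂μ := by
              linarith [ih.2]
          _ = 2 * ∑ i ∈ insert a s, ∫ ω, |X i ω| ^ r ∂μ := by
              rw [Finset.sum_insert ha]; ring
  exact (key Finset.univ).2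
end

section
/- Let 1 ≤ p ≤ 2 and let A ∈ ℝ^{n×d} have full column rank (rank d). For i ∈ [n], let a_i ∈ ℝ^d denote the i-th row of A and define the leverage score τ_i(A) = a_iᵀ (AᵀA)⁻¹ a_i. Then for every i ∈ [n] and every x ∈ ℝ^d, |⟨a_i, x⟩|^p ≤ (τ_i(A))^{p/2} · ‖Ax‖_p^p. Equivalently, the ℓ_p-sensitivity ℓ_i^{(p)}(A) = sup_{x : Ax ≠ 0} |⟨a_i, x⟩|^p / ‖Ax‖_p^p satisfies ℓ_i^{(p)}(A) ≤ (τ_i(A))^{p/2}. -/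
open Matrix Finset

lemma aux_rpow_sum_le_sum_rpow {ι : Type*} (s : Finset ι) (f : ι → NNReal) {q : ℝ}
    (hq0 : 0 < q) (hq1 : q ≤ 1) : (∑ i ∈ s, f i) ^ q ≤ ∑ i ∈ s, f i ^ q := by
  induction s using Finset.cons_induction with
  | empty => simp [NNReal.zero_rpow hq0.ne']
  | cons a s ha ih =>
    rw [Finset.sum_cons, Finset.sum_cons]
    refine (NNReal.rpow_add_le_add_rpow _ _ hq0.le hq1).trans ?_
    gcongr

theorem stmt_14 (p : ℝ) (hp1 : 1 ≤ p) (hp2 : p ≤ 2) (n d : ℕ)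
    (A : Matrix (Fin n) (Fin d) ℝ) (hrank : A.rank = d) :
    ∀ (i : Fin n) (x : Fin d → ℝ),
      |A i ⬝ᵥ x| ^ p ≤ (A i ⬝ᵥ ((Aᵀ * A)⁻¹ *ᵥ A i)) ^ (p / 2) * ∑ j, |(A *ᵥ x) j| ^ p := by
  intro i x
  set B := Aᵀ * A with hBdef
  -- B is invertible
  have hkerA : LinearMap.ker A.mulVecLin = ⊥ := by
    have h1 := A.mulVecLin.finrank_range_add_finrank_ker
    rw [Module.finrank_pi] at h1
    have hr : Module.finrank ℝ (LinearMap.range A.mulVecLin) = d := hrank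
    rw [hr, Fintype.card_fin] at h1
    have h2 : Module.finrank ℝ (LinearMap.ker A.mulVecLin) = 0 := by omega
    exact Submodule.finrank_eq_zero.mp h2
  have hkerB : LinearMap.ker B.mulVecLin = ⊥ := by
    rw [hBdef, Matrix.ker_mulVecLin_transpose_mul_self]; exact hkerA
  have hBinj : Function.Injective (B.mulVec) := by
    have := LinearMap.ker_eq_bot.mp hkerB
    exact this
  have hBunit : IsUnit B := Matrix.mulVec_injective_iff_isUnit.mp hBinj
  have hBdet : IsUnit B.det := (Matrix.isUnit_iff_isUnit_det B).mp hBunit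
  set c : Fin d → ℝ := B⁻¹ *ᵥ A i with hc
  have hBc : B *ᵥ c = A i := by
    rw [hc, Matrix.mulVec_mulVec, Matrix.mul_nonsing_inv _ hBdet, Matrix.one_mulVec]
  -- key: (A *ᵥ c) ᵥ* A = A i
  have hkey : ∀ v : Fin d → ℝ, (A *ᵥ c) ⬝ᵥ (A *ᵥ v) = A i ⬝ᵥ v := by
    intro v
    rw [Matrix.dotProduct_mulVec, ← Matrix.mulVec_transpose, Matrix.mulVec_mulVec, ← hBdef, hBc]
  set τ : ℝ := A i ⬝ᵥ c with hτ
  set y : Fin n → ℝ := A *ᵥ x with hy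
  have hnorm : ∑ j, (A *ᵥ c) j ^ 2 = τ := by
    rw [hτ, ← hkey c]
    simp [dotProduct, sq]
  -- Cauchy-Schwarz
  have hCS : (A i ⬝ᵥ x) ^ 2 ≤ τ * ∑ j, y j ^ 2 := by
    have h := Finset.sum_mul_sq_le_sq_mul_sq Finset.univ (fun j => (A *ᵥ c) j) (fun j => y j)
    rw [hnorm] at h
    have he : A i ⬝ᵥ x = ∑ j, (A *ᵥ c) j * y j := by
      rw [← hkey x]; rfl
    rw [he]; exact h
  have hτ0 : 0 ≤ τ := by
    rw [← hnorm]; positivity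
  have hS0 : 0 ≤ ∑ j, y j ^ 2 := by positivity
  have hp0 : 0 < p := lt_of_lt_of_le one_pos hp1
  -- |A i ⬝ᵥ x| ^ p = ((A i ⬝ᵥ x)^2) ^ (p/2)
  have habs : |A i ⬝ᵥ x| ^ p = ((A i ⬝ᵥ x) ^ 2) ^ (p / 2) := by
    rw [← sq_abs, ← Real.rpow_natCast |A i ⬝ᵥ x| 2, ← Real.rpow_mul (abs_nonneg _)]
    congr 1
    push_cast; ring
  have step1 : |A i ⬝ᵥ x| ^ p ≤ (τ * ∑ j, y j ^ 2) ^ (p / 2) := by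
    rw [habs]
    exact Real.rpow_le_rpow (sq_nonneg _) hCS (by positivity)
  have step2 : (τ * ∑ j, y j ^ 2) ^ (p / 2) = τ ^ (p / 2) * (∑ j, y j ^ 2) ^ (p / 2) :=
    Real.mul_rpow hτ0 hS0
  -- subadditivity of t ↦ t^(p/2)
  have step3 : (∑ j, y j ^ 2) ^ (p / 2) ≤ ∑ j, |y j| ^ p := by
    have hq0 : 0 < p / 2 := by positivity
    have hq1 : p / 2 ≤ 1 := by linarith
    have h := aux_rpow_sum_le_sum_rpow Finset.univ (fun j => ‖y j‖₊ ^ 2) hq0 hq1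
    have hcoe : ((∑ j, ‖y j‖₊ ^ 2 : NNReal) : ℝ) = ∑ j, y j ^ 2 := by
      push_cast
      exact Finset.sum_congr rfl fun j _ => by rw [Real.norm_eq_abs, sq_abs]
    calc (∑ j, y j ^ 2) ^ (p / 2) = (((∑ j, ‖y j‖₊ ^ 2 : NNReal) : ℝ)) ^ (p / 2) := by
            rw [hcoe]
      _ = (((∑ j, ‖y j‖₊ ^ 2 : NNReal) ^ (p / 2) : NNReal) : ℝ) := by
            rw [NNReal.coe_rpow]
      _ ≤ (((∑ j, (‖y j‖₊ ^ 2 : NNReal) ^ (p / 2) : NNReal)) : ℝ) := by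
            exact_mod_cast h
      _ = ∑ j, |y j| ^ p := by
            push_cast
            refine Finset.sum_congr rfl fun j _ => ?_
            rw [Real.norm_eq_abs, ← Real.rpow_natCast |y j| 2, ← Real.rpow_mul (abs_nonneg _)]
            congr 1
            push_cast; ring
  calc |A i ⬝ᵥ x| ^ p ≤ τ ^ (p / 2) * (∑ j, y j ^ 2) ^ (p / 2) := by
        rw [← step2]; exact step1
    _ ≤ τ ^ (p / 2) * ∑ j, |y j| ^ p := by
        refine mul_le_mul_of_nonneg_left step3 ?_
        positivity
    _ = (A i ⬝ᵥ ((Aᵀ * A)⁻¹ *ᵥ A i)) ^ (p / 2) * ∑ j, |(A *ᵥ x) j| ^ p := by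
        rw [hτ, hc, hy, hBdef]
end

section
/- Let B ∈ ℝ^{m×d}, let ε₀ ∈ (0, 1/2], and suppose that (1 − ε₀)·‖x‖₂ ≤ ‖Bx‖₂ ≤ (1 + ε₀)·‖x‖₂ for every x ∈ ℝ^d. Let b ∈ ℝ^m and let x* ∈ ℝ^d satisfy Bᵀ(Bx* − b) = 0. Then for every x ∈ ℝ^d, the gradient-descent update x' = x − Bᵀ(Bx − b) satisfies ‖B(x' − x*)‖₂ ≤ 8ε₀·‖B(x − x*)‖₂. -/
open Matrix Finset

/-- Euclidean norm of a vector in `Fin k → ℝ`. -/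
noncomputable def euclNorm {k : ℕ} (v : Fin k → ℝ) : ℝ :=
  Real.sqrt (∑ i, v i ^ 2)

lemma euclNorm_nonneg {k : ℕ} (v : Fin k → ℝ) : 0 ≤ euclNorm v :=
  Real.sqrt_nonneg _

lemma sq_euclNorm {k : ℕ} (v : Fin k → ℝ) : euclNorm v ^ 2 = v ⬝ᵥ v := by
  rw [euclNorm, Real.sq_sqrt (by positivity)]
  simp [dotProduct, sq]

lemma euclNorm_smul {k : ℕ} (t : ℝ) (v : Fin k → ℝ) :
    euclNorm (t • v) = |t| * euclNorm v := by
  simp only [euclNorm, Pi.smul_apply, smul_eq_mul, mul_pow]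
  rw [← Finset.mul_sum, Real.sqrt_mul (sq_nonneg t), Real.sqrt_sq_eq_abs]

lemma euclNorm_eq_zero {k : ℕ} {v : Fin k → ℝ} (h : euclNorm v = 0) : v = 0 := by
  have hnn : 0 ≤ ∑ i, v i ^ 2 := by positivity
  have h2 : ∑ i, v i ^ 2 = 0 := by
    have := Real.sq_sqrt hnn
    rw [euclNorm] at h
    rw [h] at this
    linarith [this.symm]
  funext i
  have hi := (Finset.sum_eq_zero_iff_of_nonneg
    (fun i _ => sq_nonneg (v i))).mp h2 i (Finset.mem_univ i)
  exact pow_eq_zero_iff (two_ne_zero) |>.mp hi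

lemma sym_bilin {d : ℕ} (A : Matrix (Fin d) (Fin d) ℝ) (hA : Aᵀ = A)
    (u w : Fin d → ℝ) : w ⬝ᵥ (A *ᵥ u) = u ⬝ᵥ (A *ᵥ w) := by
  conv_lhs => rw [← hA]
  rw [Matrix.dotProduct_mulVec, Matrix.vecMul_transpose, dotProduct_comm]

lemma opnorm_of_quad {d : ℕ} (A : Matrix (Fin d) (Fin d) ℝ) (hA : Aᵀ = A)
    (c : ℝ) (hc : 0 ≤ c)
    (hQ : ∀ v, |v ⬝ᵥ (A *ᵥ v)| ≤ c * euclNorm v ^ 2) (e : Fin d → ℝ) :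
    euclNorm (A *ᵥ e) ≤ c * euclNorm e := by
  -- polarization estimate
  have polar : ∀ u w : Fin d → ℝ,
      |u ⬝ᵥ (A *ᵥ w)| ≤ c * (euclNorm u ^ 2 + euclNorm w ^ 2) / 2 := by
    intro u w
    have hid : 4 * (u ⬝ᵥ (A *ᵥ w)) =
        (u + w) ⬝ᵥ (A *ᵥ (u + w)) - (u - w) ⬝ᵥ (A *ᵥ (u - w)) := by
      have hs := sym_bilin A hA u w
      simp only [Matrix.mulVec_add, Matrix.mulVec_sub, dotProduct_add,
        dotProduct_sub, add_dotProduct, sub_dotProduct]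
      linarith [hs]
    have hsum : euclNorm (u + w) ^ 2 + euclNorm (u - w) ^ 2 =
        2 * euclNorm u ^ 2 + 2 * euclNorm w ^ 2 := by
      simp only [sq_euclNorm, dotProduct_add, dotProduct_sub, add_dotProduct,
        sub_dotProduct]
      ring_nf
      try linarith [dotProduct_comm u w]
    have h1 := hQ (u + w)
    have h2 := hQ (u - w)
    rw [abs_le] at h1 h2 ⊢
    constructor <;> nlinarith [h1.1, h1.2, h2.1, h2.2]
  set s := euclNorm (A *ᵥ e) with hs
  set n := euclNorm e with hn
  have hs0 : 0 ≤ s := euclNorm_nonneg _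
  have hn0 : 0 ≤ n := euclNorm_nonneg _
  rcases eq_or_lt_of_le hs0 with h | hspos
  · rw [← h]; positivity
  have hnpos : 0 < n := by
    rcases eq_or_lt_of_le hn0 with h | h
    · exfalso
      have he0 : e = 0 := euclNorm_eq_zero (by rw [← hn, ← h])
      have hzero : s = 0 := by
        rw [hs, he0, Matrix.mulVec_zero]
        simp [euclNorm]
      linarith
    · exact h
  set t := Real.sqrt (s / n) with ht
  have htpos : 0 < t := Real.sqrt_pos.mpr (div_pos hspos hnpos)
  have ht2 : t ^ 2 = s / n := Real.sq_sqrt (le_of_lt (div_pos hspos hnpos))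
  have key := polar (t • e) (t⁻¹ • (A *ᵥ e))
  have hdot : (t • e) ⬝ᵥ (A *ᵥ (t⁻¹ • (A *ᵥ e))) = s ^ 2 := by
    rw [Matrix.mulVec_smul, smul_dotProduct, dotProduct_smul]
    rw [sym_bilin A hA (A *ᵥ e) e]
    rw [smul_eq_mul, smul_eq_mul, ← sq_euclNorm]
    field_simp
    rw [hs]
  have hnu : euclNorm (t • e) = t * n := by
    rw [euclNorm_smul, abs_of_pos htpos, hn]
  have hnw : euclNorm (t⁻¹ • (A *ᵥ e)) = t⁻¹ * s := by
    rw [euclNorm_smul, abs_of_pos (inv_pos.mpr htpos), hs]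
  rw [hdot, hnu, hnw] at key
  have habs : s ^ 2 ≤ |s ^ 2| := le_abs_self _
  have hcalc : c * ((t * n) ^ 2 + (t⁻¹ * s) ^ 2) / 2 = c * s * n := by
    have htne : t ≠ 0 := ne_of_gt htpos
    have h1 : (t * n) ^ 2 = s * n := by
      rw [mul_pow, ht2]; field_simp
    have h2 : (t⁻¹ * s) ^ 2 = n * s := by
      rw [mul_pow, inv_pow, ht2]
      rw [inv_div]
      field_simp
    rw [h1, h2]
    ring
  rw [hcalc] at key
  have : s ^ 2 ≤ c * s * n := le_trans habs key
  nlinarith [this, hspos]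

theorem stmt_15 (m d : ℕ) (B : Matrix (Fin m) (Fin d) ℝ) (ε₀ : ℝ)
    (hε₀ : 0 < ε₀) (hε₀' : ε₀ ≤ 1 / 2)
    (hB : ∀ x : Fin d → ℝ,
      (1 - ε₀) * euclNorm x ≤ euclNorm (B *ᵥ x) ∧
      euclNorm (B *ᵥ x) ≤ (1 + ε₀) * euclNorm x)
    (b : Fin m → ℝ) (xstar : Fin d → ℝ)
    (hstar : Bᵀ *ᵥ (B *ᵥ xstar - b) = 0) :
    ∀ x : Fin d → ℝ,
      euclNorm (B *ᵥ ((x - Bᵀ *ᵥ (B *ᵥ x - b)) - xstar)) ≤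
        8 * ε₀ * euclNorm (B *ᵥ (x - xstar)) := by
  intro x
  set A : Matrix (Fin d) (Fin d) ℝ := 1 - Bᵀ * B with hAdef
  have hA : Aᵀ = A := by
    rw [hAdef, Matrix.transpose_sub, Matrix.transpose_one, Matrix.transpose_mul,
      Matrix.transpose_transpose]
  set e : Fin d → ℝ := x - xstar with he
  have key : (x - Bᵀ *ᵥ (B *ᵥ x - b)) - xstar = A *ᵥ e := by
    have h1 : Bᵀ *ᵥ (B *ᵥ x - b) = Bᵀ *ᵥ (B *ᵥ e) := by
      have hbx : (B *ᵥ x - b) = B *ᵥ e + (B *ᵥ xstar - b) := by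
        rw [he, Matrix.mulVec_sub]; abel
      rw [hbx, Matrix.mulVec_add, hstar, add_zero]
    rw [h1, hAdef, Matrix.sub_mulVec, Matrix.one_mulVec, ← Matrix.mulVec_mulVec]
    rw [he]
    abel
  rw [key]
  -- quadratic form bound
  have hQ : ∀ v, |v ⬝ᵥ (A *ᵥ v)| ≤ (2 * ε₀ + ε₀ ^ 2) * euclNorm v ^ 2 := by
    intro v
    have hqv : v ⬝ᵥ (A *ᵥ v) = euclNorm v ^ 2 - euclNorm (B *ᵥ v) ^ 2 := by
      rw [hAdef, Matrix.sub_mulVec, Matrix.one_mulVec, dotProduct_sub,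
        ← Matrix.mulVec_mulVec, Matrix.dotProduct_mulVec,
        Matrix.vecMul_transpose, sq_euclNorm, sq_euclNorm]
    have hv := hB v
    have h1 : 0 ≤ euclNorm v := euclNorm_nonneg v
    have h2 : 0 ≤ euclNorm (B *ᵥ v) := euclNorm_nonneg _
    have hub : euclNorm (B *ᵥ v) ^ 2 ≤ (1 + ε₀) ^ 2 * euclNorm v ^ 2 := by
      nlinarith [mul_self_le_mul_self h2 hv.2]
    have hlb : (1 - ε₀) ^ 2 * euclNorm v ^ 2 ≤ euclNorm (B *ᵥ v) ^ 2 := by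
      have hnn : (0 : ℝ) ≤ (1 - ε₀) * euclNorm v := by nlinarith
      nlinarith [mul_self_le_mul_self hnn hv.1]
    rw [hqv, abs_le]
    constructor <;> nlinarith [hub, hlb, sq_nonneg (euclNorm v), hε₀.le]
  have hop := opnorm_of_quad A hA (2 * ε₀ + ε₀ ^ 2) (by positivity) hQ e
  have hBA := (hB (A *ᵥ e)).2
  have hlow := (hB e).1
  have hBe : 0 ≤ euclNorm (B *ᵥ e) := euclNorm_nonneg _
  have hAe : 0 ≤ euclNorm (A *ᵥ e) := euclNorm_nonneg _
  have hne : 0 ≤ euclNorm e := euclNorm_nonneg _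
  -- ‖e‖ ≤ 2‖Be‖
  have hetwice : euclNorm e ≤ 2 * euclNorm (B *ᵥ e) := by nlinarith
  calc euclNorm (B *ᵥ (A *ᵥ e)) ≤ (1 + ε₀) * euclNorm (A *ᵥ e) := hBA
    _ ≤ (1 + ε₀) * ((2 * ε₀ + ε₀ ^ 2) * euclNorm e) := by nlinarith
    _ ≤ 8 * ε₀ * euclNorm (B *ᵥ e) := by
        have hC : (0:ℝ) ≤ (1 + ε₀) * (2 * ε₀ + ε₀ ^ 2) := by positivity
        have h1 := mul_le_mul_of_nonneg_left hetwice hC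
        have h2 : (1 + ε₀) * (2 * ε₀ + ε₀ ^ 2) * 2 ≤ 8 * ε₀ := by nlinarith
        have h3 := mul_le_mul_of_nonneg_right h2 hBe
        nlinarith [h1, h3]
end
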